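/- Let σ be a well-balanced nontrivial automorphism of a finite hypergraph with p orbits of cardinality q each. Define a quotient hypergraph whose nodes are Fin q, obtained by grouping into a single node all nodes whose orbit-index decomposition has the same second coordinate, and whose edges are the edges of H connecting nodes in at least two distinct groups, with each quotient edge connecting the groups its original nodes lie in. Then the shift map j ↦ j+1 mod q on Fin q extends to an automorphism of the quotient hypergraph with a single orbit. -/

import Mathlib

structure HypergraphStmt (N X : Type*) [Fintype N] [Fintype X] where
  t : X → Set N

def orbitOf {N : Type*} (σ : Equiv.Perm N) (n : N) : Set N :=
  {m | ∃ j : ℕ, (σ ^ j) n = m}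

/-- Quotienting a hypergraph by a well-balanced nontrivial automorphism:
nodes are identified with `Fin p × Fin q` so that the automorphism acts as
`(i, j) ↦ (i, j+1 mod q)`.  The quotient hypergraph has nodes `Fin q`
(grouping together nodes with the same second coordinate), and as edges
those edges of `H` connecting nodes in at least two distinct groups, each
such edge connecting the groups its original nodes lie in.  Then the shift
map `j ↦ j+1 mod q` extends to an automorphism of the quotient hypergraph
having a single orbit. -/
theorem quotient_has_one_orbit_automorphism
    (p q : ℕ) [NeZero q] (hq : 1 < q) (X : Type*) [Fintype X]
    (H : HypergraphStmt (Fin p × Fin q) X) (σX : Equiv.Perm X)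
    (hAut : ∀ x : X,
      H.t (σX x) = (fun n : Fin p × Fin q => (n.1, n.2 + 1)) '' H.t x) :
    ∃ ρX : Equiv.Perm {x : X // ∃ n ∈ H.t x, ∃ m ∈ H.t x, n.2 ≠ m.2},
      (∀ x : {x : X // ∃ n ∈ H.t x, ∃ m ∈ H.t x, n.2 ≠ m.2},
        Prod.snd '' H.t (ρX x).val =
          (fun j : Fin q => j + 1) '' (Prod.snd '' H.t x.val)) ∧
      (∀ j : Fin q, orbitOf (Equiv.addRight (1 : Fin q)) j = Set.univ) := by
  have key : ∀ x : X, (∃ n ∈ H.t x, ∃ m ∈ H.t x, n.2 ≠ m.2) →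
      (∃ n ∈ H.t (σX x), ∃ m ∈ H.t (σX x), n.2 ≠ m.2) := by
    intro x ⟨n, hn, m, hm, hnm⟩
    refine ⟨(n.1, n.2 + 1), ?_, (m.1, m.2 + 1), ?_, ?_⟩
    · rw [hAut x]; exact ⟨n, hn, rfl⟩
    · rw [hAut x]; exact ⟨m, hm, rfl⟩
    · simpa using hnm
  have key' : ∀ x : X, (∃ n ∈ H.t (σX x), ∃ m ∈ H.t (σX x), n.2 ≠ m.2) →
      (∃ n ∈ H.t x, ∃ m ∈ H.t x, n.2 ≠ m.2) := by
    intro x ⟨n, hn, m, hm, hnm⟩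
    rw [hAut x] at hn hm
    obtain ⟨n', hn', rfl⟩ := hn
    obtain ⟨m', hm', rfl⟩ := hm
    exact ⟨n', hn', m', hm', fun h => hnm (by simp [h])⟩
  refine ⟨σX.subtypePerm (fun x => ⟨key' x, key x⟩), ?_, ?_⟩
  · intro x
    show Prod.snd '' H.t (σX x.val) = _
    rw [hAut x.val, ← Set.image_comp, ← Set.image_comp]
    rfl
  · intro j
    ext k
    simp only [orbitOf, Set.mem_setOf_eq, Set.mem_univ, iff_true]
    refine ⟨(k - j).val, ?_⟩
    open Fin.CommRing in
    have hpow : ∀ (n : ℕ) (a : Fin q),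
        ((Equiv.addRight (1 : Fin q)) ^ n) a = a + (n : Fin q) := by
      intro n
      induction n with
      | zero => simp
      | succ m ih =>
        intro a
        rw [pow_succ, Equiv.Perm.mul_apply, ih]
        push_cast
        simp [Equiv.addRight]; ring
    rw [hpow]
    open Fin.CommRing in simp
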